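/- arXiv:1511.08190 — 3 statements merged into one kernel-verified Lean document; each statement's English description precedes it below -/
import Mathlib

section
/- Pairwise likelihood, no exceedances: let β, κ > 0, a₁, a₂, a₃ > 0 with a₁ + a₂ = a₂ + a₃ = α, let μ = Γ(a₁,β) ⊗ Γ(a₂,β) ⊗ Γ(a₃,β) on ℝ³, and set Λ₁ = s₁ + s₂, Λ₂ = s₂ + s₃. Then ∫_{ℝ³} (1 − e^{−κΛ₁})(1 − e^{−κΛ₂}) dμ = 1 − 2(1 + κ/β)^{−α} + (1 + κ/β)^{−a₁−a₃} (1 + 2κ/β)^{−a₂}. -/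
open MeasureTheory ProbabilityTheory Real

lemma gamma_laplace_lintegral (a β t : ℝ) (ha : 0 < a) (hβ : 0 < β) (ht : 0 ≤ t) :
    ∫⁻ x, ENNReal.ofReal (Real.exp (-(t * x))) ∂(gammaMeasure a β)
      = ENNReal.ofReal ((β / (β + t)) ^ a) := by
  have hβt : 0 < β + t := by linarith
  have hme : Measurable fun x : ℝ => ENNReal.ofReal (Real.exp (-(t * x))) :=
    Measurable.ennreal_ofReal (by fun_prop)
  have hmf : Measurable (gammaPDF a β) := (measurable_gammaPDFReal a β).ennreal_ofReal
  rw [gammaMeasure, lintegral_withDensity_eq_lintegral_mul _ hmf hme]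
  have hpt : ∀ x : ℝ, (gammaPDF a β x) * ENNReal.ofReal (Real.exp (-(t * x)))
      = ENNReal.ofReal ((β / (β + t)) ^ a) * gammaPDF a (β + t) x := by
    intro x
    rcases lt_or_ge x 0 with hx | hx
    · rw [gammaPDF_of_neg hx, gammaPDF_of_neg hx, zero_mul, mul_zero]
    · rw [gammaPDF_of_nonneg hx, gammaPDF_of_nonneg hx,
        ← ENNReal.ofReal_mul (by positivity), ← ENNReal.ofReal_mul (by positivity)]
      congr 1
      have h1 : Real.exp (-(β * x)) * Real.exp (-(t * x)) = Real.exp (-((β + t) * x)) := by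
        rw [← Real.exp_add]; ring_nf
      have h2 : (β / (β + t)) ^ a * (β + t) ^ a = β ^ a := by
        rw [Real.div_rpow hβ.le hβt.le,
          div_mul_cancel₀ _ (Real.rpow_pos_of_pos hβt a).ne']
      calc β ^ a / Real.Gamma a * x ^ (a - 1) * Real.exp (-(β * x)) * Real.exp (-(t * x))
          = β ^ a / Real.Gamma a * x ^ (a - 1) * Real.exp (-((β + t) * x)) := by
            rw [mul_assoc, h1]
        _ = (β / (β + t)) ^ a
              * ((β + t) ^ a / Real.Gamma a * x ^ (a - 1) * Real.exp (-((β + t) * x))) := by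
            rw [← h2]; ring
  calc ∫⁻ x, (gammaPDF a β * fun x => ENNReal.ofReal (Real.exp (-(t * x)))) x
      = ∫⁻ x, ENNReal.ofReal ((β / (β + t)) ^ a) * gammaPDF a (β + t) x := by
        refine lintegral_congr fun x => ?_
        exact hpt x
    _ = ENNReal.ofReal ((β / (β + t)) ^ a) * ∫⁻ x, gammaPDF a (β + t) x := by
        have hmf2 : Measurable (gammaPDF a (β + t)) :=
          (measurable_gammaPDFReal a (β + t)).ennreal_ofReal
        rw [lintegral_const_mul _ hmf2]
    _ = ENNReal.ofReal ((β / (β + t)) ^ a) := by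
        rw [lintegral_gammaPDF_eq_one ha hβt, mul_one]

lemma base_eq (β t : ℝ) (hβ : 0 < β) (ht : 0 ≤ t) (a : ℝ) :
    (β / (β + t)) ^ a = (1 + t / β) ^ (-a) := by
  have hβt : 0 < β + t := by linarith
  have h : (1 : ℝ) + t / β = (β + t) / β := by field_simp
  rw [h, Real.rpow_neg (by positivity), ← Real.inv_rpow (by positivity), inv_div]

lemma gamma_exp_integrable (a β t : ℝ) (ha : 0 < a) (hβ : 0 < β) (ht : 0 ≤ t) :
    Integrable (fun x => Real.exp (-(t * x))) (gammaMeasure a β) := by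
  refine ⟨(Real.measurable_exp.comp (measurable_const.mul measurable_id').neg).aestronglyMeasurable, ?_⟩
  rw [hasFiniteIntegral_iff_ofReal (ae_of_all _ fun x => (Real.exp_pos _).le)]
  rw [gamma_laplace_lintegral a β t ha hβ ht]
  exact ENNReal.ofReal_lt_top

lemma gamma_laplace (a β t : ℝ) (ha : 0 < a) (hβ : 0 < β) (ht : 0 ≤ t) :
    ∫ x, Real.exp (-(t * x)) ∂(gammaMeasure a β) = (1 + t / β) ^ (-a) := by
  rw [integral_eq_lintegral_of_nonneg_ae (ae_of_all _ fun x => (Real.exp_pos _).le)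
    (by fun_prop : Measurable fun x : ℝ => Real.exp (-(t * x))).aestronglyMeasurable,
    gamma_laplace_lintegral a β t ha hβ ht,
    ENNReal.toReal_ofReal (Real.rpow_nonneg (by positivity) a), base_eq β t hβ ht]

/-- The slice measure: product of three Gamma distributions with shapes
`a₁, a₂, a₃` and common rate `β`, the law of the slices of the trawl sets at two
time points, with latent values `Λ₁ = S₁ + S₂`, `Λ₂ = S₂ + S₃`. -/
noncomputable def sliceMeasure (a₁ a₂ a₃ β : ℝ) : Measure (ℝ × ℝ × ℝ) :=
  (gammaMeasure a₁ β).prod ((gammaMeasure a₂ β).prod (gammaMeasure a₃ β))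

/-- Pairwise likelihood, no exceedances: with `Λ₁ = S₁ + S₂`, `Λ₂ = S₂ + S₃` in the
slice model and `a₁ + a₂ = a₂ + a₃ = α`,
`E[(1 - e^{-κΛ₁})(1 - e^{-κΛ₂})]`
`= 1 - 2(1 + κ/β)^{-α} + (1 + κ/β)^{-a₁-a₃}(1 + 2κ/β)^{-a₂}`. -/
theorem pairwise_likelihood_no_exceedance (β κ a₁ a₂ a₃ α : ℝ)
    (hβ : 0 < β) (hκ : 0 < κ) (ha₁ : 0 < a₁) (ha₂ : 0 < a₂) (ha₃ : 0 < a₃)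
    (hα₁ : a₁ + a₂ = α) (hα₂ : a₂ + a₃ = α) :
    (∫ s : ℝ × ℝ × ℝ,
        (1 - Real.exp (-κ * (s.1 + s.2.1))) * (1 - Real.exp (-κ * (s.2.1 + s.2.2)))
        ∂(sliceMeasure a₁ a₂ a₃ β))
      = 1 - 2 * (1 + κ / β) ^ (-α)
          + (1 + κ / β) ^ (-a₁ - a₃) * (1 + 2 * κ / β) ^ (-a₂) := by
  haveI i1 : IsProbabilityMeasure (gammaMeasure a₁ β) := isProbabilityMeasure_gammaMeasure ha₁ hβ
  haveI i2 : IsProbabilityMeasure (gammaMeasure a₂ β) := isProbabilityMeasure_gammaMeasure ha₂ hβ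
  haveI i3 : IsProbabilityMeasure (gammaMeasure a₃ β) := isProbabilityMeasure_gammaMeasure ha₃ hβ
  set ν₁ := gammaMeasure a₁ β
  set ν₂ := gammaMeasure a₂ β
  set ν₃ := gammaMeasure a₃ β
  have hf1 : ∀ (a : ℝ), 0 < a → Integrable (fun x => Real.exp (-(κ * x))) (gammaMeasure a β) :=
    fun a ha => gamma_exp_integrable a β κ ha hβ hκ.le
  have hf2 : Integrable (fun x => Real.exp (-((2 * κ) * x))) ν₂ :=
    gamma_exp_integrable a₂ β (2 * κ) ha₂ hβ (by positivity)
  set A : ℝ × ℝ × ℝ → ℝ := fun p => Real.exp (-(κ * p.1)) * (Real.exp (-(κ * p.2.1)) * 1) with hA_def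
  set B : ℝ × ℝ × ℝ → ℝ := fun p => 1 * (Real.exp (-(κ * p.2.1)) * Real.exp (-(κ * p.2.2))) with hB_def
  set C : ℝ × ℝ × ℝ → ℝ := fun p =>
    Real.exp (-(κ * p.1)) * (Real.exp (-((2 * κ) * p.2.1)) * Real.exp (-(κ * p.2.2))) with hC_def
  haveI hprob : IsProbabilityMeasure (sliceMeasure a₁ a₂ a₃ β) := by
    unfold sliceMeasure; infer_instance
  have hA : Integrable A (sliceMeasure a₁ a₂ a₃ β) :=
    (hf1 a₁ ha₁).mul_prod ((hf1 a₂ ha₂).mul_prod (integrable_const 1))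
  have hB : Integrable B (sliceMeasure a₁ a₂ a₃ β) :=
    (integrable_const 1).mul_prod ((hf1 a₂ ha₂).mul_prod (hf1 a₃ ha₃))
  have hC : Integrable C (sliceMeasure a₁ a₂ a₃ β) :=
    (hf1 a₁ ha₁).mul_prod (hf2.mul_prod (hf1 a₃ ha₃))
  have hsplit : ∀ c x y : ℝ, Real.exp (-c * (x + y)) = Real.exp (-(c * x)) * Real.exp (-(c * y)) := by
    intro c x y; rw [← Real.exp_add]; ring_nf
  have h2κ : ∀ x : ℝ, Real.exp (-(κ * x)) * Real.exp (-(κ * x)) = Real.exp (-((2 * κ) * x)) := by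
    intro x; rw [← Real.exp_add]; ring_nf
  have hint_eq : (fun s : ℝ × ℝ × ℝ =>
      (1 - Real.exp (-κ * (s.1 + s.2.1))) * (1 - Real.exp (-κ * (s.2.1 + s.2.2))))
      = fun p => 1 - A p - B p + C p := by
    funext p
    simp only [hA_def, hB_def, hC_def, hsplit κ, ← h2κ]
    ring
  have h1A : Integrable (fun p => 1 - A p) (sliceMeasure a₁ a₂ a₃ β) := (integrable_const 1).sub hA
  have h1AB : Integrable (fun p => 1 - A p - B p) (sliceMeasure a₁ a₂ a₃ β) := h1A.sub hB
  rw [hint_eq, integral_add h1AB hC, integral_sub h1A hB, integral_sub (integrable_const 1) hA]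
  have h1 : ∫ _ : ℝ × ℝ × ℝ, (1 : ℝ) ∂(sliceMeasure a₁ a₂ a₃ β) = 1 := by
    simp [hprob.measure_univ]
  have hL : ∀ (a : ℝ), 0 < a → ∫ x, Real.exp (-(κ * x)) ∂(gammaMeasure a β)
      = (1 + κ / β) ^ (-a) := fun a ha => gamma_laplace a β κ ha hβ hκ.le
  have hone : ∫ _ : ℝ, (1 : ℝ) ∂ν₃ = 1 := by simp
  have hIA : ∫ p, A p ∂(sliceMeasure a₁ a₂ a₃ β) = (1 + κ / β) ^ (-a₁) * ((1 + κ / β) ^ (-a₂) * 1) := by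
    calc ∫ p, A p ∂(sliceMeasure a₁ a₂ a₃ β)
        = (∫ x, Real.exp (-(κ * x)) ∂ν₁)
            * ∫ q : ℝ × ℝ, Real.exp (-(κ * q.1)) * 1 ∂(ν₂.prod ν₃) :=
          integral_prod_mul (f := fun x => Real.exp (-(κ * x)))
            (g := fun q : ℝ × ℝ => Real.exp (-(κ * q.1)) * 1)
      _ = (∫ x, Real.exp (-(κ * x)) ∂ν₁)
            * ((∫ x, Real.exp (-(κ * x)) ∂ν₂) * ∫ _ : ℝ, (1 : ℝ) ∂ν₃) := by
          rw [integral_prod_mul (f := fun x => Real.exp (-(κ * x))) (g := fun _ : ℝ => (1 : ℝ))]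
      _ = (1 + κ / β) ^ (-a₁) * ((1 + κ / β) ^ (-a₂) * 1) := by
          rw [hL a₁ ha₁, hL a₂ ha₂, hone]
  have hIB : ∫ p, B p ∂(sliceMeasure a₁ a₂ a₃ β) = 1 * ((1 + κ / β) ^ (-a₂) * (1 + κ / β) ^ (-a₃)) := by
    calc ∫ p, B p ∂(sliceMeasure a₁ a₂ a₃ β)
        = (∫ _ : ℝ, (1 : ℝ) ∂ν₁)
            * ∫ q : ℝ × ℝ, Real.exp (-(κ * q.1)) * Real.exp (-(κ * q.2)) ∂(ν₂.prod ν₃) :=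
          integral_prod_mul (f := fun _ : ℝ => (1 : ℝ))
            (g := fun q : ℝ × ℝ => Real.exp (-(κ * q.1)) * Real.exp (-(κ * q.2)))
      _ = (∫ _ : ℝ, (1 : ℝ) ∂ν₁)
            * ((∫ x, Real.exp (-(κ * x)) ∂ν₂) * ∫ x, Real.exp (-(κ * x)) ∂ν₃) := by
          rw [integral_prod_mul (f := fun x => Real.exp (-(κ * x)))
            (g := fun x => Real.exp (-(κ * x)))]
      _ = 1 * ((1 + κ / β) ^ (-a₂) * (1 + κ / β) ^ (-a₃)) := by
          rw [hL a₂ ha₂, hL a₃ ha₃]; simp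
  have hIC : ∫ p, C p ∂(sliceMeasure a₁ a₂ a₃ β)
      = (1 + κ / β) ^ (-a₁) * ((1 + 2 * κ / β) ^ (-a₂) * (1 + κ / β) ^ (-a₃)) := by
    calc ∫ p, C p ∂(sliceMeasure a₁ a₂ a₃ β)
        = (∫ x, Real.exp (-(κ * x)) ∂ν₁)
            * ∫ q : ℝ × ℝ, Real.exp (-((2 * κ) * q.1)) * Real.exp (-(κ * q.2)) ∂(ν₂.prod ν₃) :=
          integral_prod_mul (f := fun x => Real.exp (-(κ * x)))
            (g := fun q : ℝ × ℝ => Real.exp (-((2 * κ) * q.1)) * Real.exp (-(κ * q.2)))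
      _ = (∫ x, Real.exp (-(κ * x)) ∂ν₁)
            * ((∫ x, Real.exp (-((2 * κ) * x)) ∂ν₂) * ∫ x, Real.exp (-(κ * x)) ∂ν₃) := by
          rw [integral_prod_mul (f := fun x => Real.exp (-((2 * κ) * x)))
            (g := fun x => Real.exp (-(κ * x)))]
      _ = (1 + κ / β) ^ (-a₁) * ((1 + 2 * κ / β) ^ (-a₂) * (1 + κ / β) ^ (-a₃)) := by
          rw [hL a₁ ha₁, hL a₃ ha₃,
            gamma_laplace a₂ β (2 * κ) ha₂ hβ (by positivity)]
  rw [h1, hIA, hIB, hIC]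
  have hb : (0 : ℝ) < 1 + κ / β := by positivity
  have e1 : (1 + κ / β) ^ (-a₁) * (1 + κ / β) ^ (-a₂) = (1 + κ / β) ^ (-α) := by
    rw [← Real.rpow_add hb]; ring_nf; rw [← hα₁]; ring_nf
  have e2 : (1 + κ / β) ^ (-a₂) * (1 + κ / β) ^ (-a₃) = (1 + κ / β) ^ (-α) := by
    rw [← Real.rpow_add hb]; ring_nf; rw [← hα₂]; ring_nf
  have e3 : (1 + κ / β) ^ (-a₁) * (1 + κ / β) ^ (-a₃) = (1 + κ / β) ^ (-a₁ - a₃) := by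
    rw [← Real.rpow_add hb]; ring_nf
  calc 1 - (1 + κ / β) ^ (-a₁) * ((1 + κ / β) ^ (-a₂) * 1)
        - 1 * ((1 + κ / β) ^ (-a₂) * (1 + κ / β) ^ (-a₃))
        + (1 + κ / β) ^ (-a₁) * ((1 + 2 * κ / β) ^ (-a₂) * (1 + κ / β) ^ (-a₃))
      = 1 - ((1 + κ / β) ^ (-a₁) * (1 + κ / β) ^ (-a₂))
        - ((1 + κ / β) ^ (-a₂) * (1 + κ / β) ^ (-a₃))
        + ((1 + κ / β) ^ (-a₁) * (1 + κ / β) ^ (-a₃)) * (1 + 2 * κ / β) ^ (-a₂) := by ring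
    _ = 1 - 2 * (1 + κ / β) ^ (-α) + (1 + κ / β) ^ (-a₁ - a₃) * (1 + 2 * κ / β) ^ (-a₂) := by
        rw [e1, e2, e3]; ring
end

section
/- Pairwise likelihood, one exceedance: let β, κ > 0, a₁, a₂, a₃ > 0 with a₁ + a₂ = a₂ + a₃ = α, let μ = Γ(a₁,β) ⊗ Γ(a₂,β) ⊗ Γ(a₃,β) on ℝ³, and set Λ₁ = s₁ + s₂, Λ₂ = s₂ + s₃. Then for every x ≥ 0, ∫_{ℝ³} Λ₁ e^{−(κ+x)Λ₁} (1 − e^{−κΛ₂}) dμ = (α/β)(1 + (κ+x)/β)^{−α−1} − (1/β)(1 + (κ+x)/β)^{−a₁−1} (1 + (2κ+x)/β)^{−a₂−1} (1 + κ/β)^{−a₃} · [ α(1 + (κ+x)/β) + a₁κ/β ]. -/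
open MeasureTheory ProbabilityTheory Real

lemma gammaMeasure_ae_nonneg {a r : ℝ} : ∀ᵐ s ∂(gammaMeasure a r), 0 ≤ s := by
  rw [ae_iff]
  have : {s : ℝ | ¬ 0 ≤ s} = Set.Iio 0 := by ext s; simp [Set.mem_Iio, not_le]
  rw [this, gammaMeasure, withDensity_apply _ measurableSet_Iio]
  exact lintegral_gammaPDF_of_nonpos le_rfl

lemma measurable_gammaPDF (a r : ℝ) : Measurable (gammaPDF a r) :=
  (measurable_gammaPDFReal a r).ennreal_ofReal

lemma gamma_exp_integral {a r : ℝ} (t : ℝ) (ha : 0 < a) (hr : 0 < r) (ht : 0 ≤ t) :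
    ∫ s, Real.exp (-t * s) ∂(gammaMeasure a r) = (1 + t / r) ^ (-a) := by
  have hrt : 0 < r + t := by linarith
  have hc : (0:ℝ) ≤ (1 + t / r) ^ (-a) := rpow_nonneg (by positivity) _
  have key : ∀ x : ℝ, gammaPDF a r x * ENNReal.ofReal (Real.exp (-t * x))
      = ENNReal.ofReal ((1 + t / r) ^ (-a)) * gammaPDF a (r + t) x := by
    intro x
    rcases lt_or_ge x 0 with h | h
    · simp [gammaPDF_of_neg h]
    · rw [gammaPDF_of_nonneg h, gammaPDF_of_nonneg h,
        ← ENNReal.ofReal_mul (by have := Real.Gamma_pos_of_pos ha; positivity),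
        ← ENNReal.ofReal_mul hc]
      congr 1
      have h1 : (1 : ℝ) + t / r = (r + t) / r := by field_simp
      have hG : Real.Gamma a ≠ 0 := (Real.Gamma_pos_of_pos ha).ne'
      have hra : (0:ℝ) < r ^ a := rpow_pos_of_pos hr a
      have hrta : (0:ℝ) < (r + t) ^ a := rpow_pos_of_pos hrt a
      have hexp : Real.exp (-(r * x)) * Real.exp (-t * x) = Real.exp (-((r + t) * x)) := by
        rw [← Real.exp_add]; ring_nf
      rw [h1, Real.div_rpow hrt.le hr.le, Real.rpow_neg hrt.le, Real.rpow_neg hr.le,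
        ← hexp]
      field_simp [hG, hra.ne', hrta.ne']
  have hm : Measurable fun s : ℝ => Real.exp (-t * s) := by fun_prop
  rw [integral_eq_lintegral_of_nonneg_ae (ae_of_all _ fun s => (Real.exp_pos _).le)
      hm.aestronglyMeasurable]
  rw [gammaMeasure, lintegral_withDensity_eq_lintegral_mul _ (measurable_gammaPDF a r)
      hm.ennreal_ofReal]
  simp only [Pi.mul_apply]
  calc (∫⁻ x, gammaPDF a r x * ENNReal.ofReal (Real.exp (-t * x))).toReal
      = (∫⁻ x, ENNReal.ofReal ((1 + t / r) ^ (-a)) * gammaPDF a (r + t) x).toReal := by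
        congr 1; exact lintegral_congr key
    _ = (1 + t / r) ^ (-a) := by
        rw [lintegral_const_mul _ (measurable_gammaPDF a (r + t)),
          lintegral_gammaPDF_eq_one ha hrt, mul_one, ENNReal.toReal_ofReal hc]

lemma gamma_moment_integral {a r : ℝ} (t : ℝ) (ha : 0 < a) (hr : 0 < r) (ht : 0 ≤ t) :
    ∫ s, s * Real.exp (-t * s) ∂(gammaMeasure a r) = (a / r) * (1 + t / r) ^ (-a - 1) := by
  have hrt : 0 < r + t := by linarith
  have ha1 : 0 < a + 1 := by linarith
  have hc : (0:ℝ) ≤ (a / r) * (1 + t / r) ^ (-a - 1) := by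
    have := rpow_nonneg (show (0:ℝ) ≤ 1 + t / r by positivity) (-a - 1); positivity
  have key : ∀ x : ℝ, gammaPDF a r x * ENNReal.ofReal (x * Real.exp (-t * x))
      = ENNReal.ofReal ((a / r) * (1 + t / r) ^ (-a - 1)) * gammaPDF (a + 1) (r + t) x := by
    intro x
    rcases lt_or_ge x 0 with h | h
    · simp [gammaPDF_of_neg h]
    · rw [gammaPDF_of_nonneg h, gammaPDF_of_nonneg h,
        ← ENNReal.ofReal_mul (by have := Real.Gamma_pos_of_pos ha; positivity),
        ← ENNReal.ofReal_mul hc]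
      congr 1
      have h1 : (1 : ℝ) + t / r = (r + t) / r := by field_simp
      have hG : Real.Gamma a ≠ 0 := (Real.Gamma_pos_of_pos ha).ne'
      have hGa1 : Real.Gamma (a + 1) = a * Real.Gamma a := Real.Gamma_add_one ha.ne'
      have hra : (0:ℝ) < r ^ (a + 1) := rpow_pos_of_pos hr _
      have hrta : (0:ℝ) < (r + t) ^ (a + 1) := rpow_pos_of_pos hrt _
      have hexp : Real.exp (-(r * x)) * Real.exp (-t * x) = Real.exp (-((r + t) * x)) := by
        rw [← Real.exp_add]; ring_nf
      have hxpow : x ^ (a - 1) * x = x ^ (a + 1 - 1) := by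
        rcases eq_or_lt_of_le h with h0 | h0
        · rw [← h0]
          rw [show a + 1 - 1 = a by ring, Real.zero_rpow ha.ne']
          simp
        · rw [show a + 1 - 1 = (a - 1) + 1 by ring, Real.rpow_add_one h0.ne']
      have hrpow : r ^ a * r = r ^ (a + 1) := by
        rw [Real.rpow_add_one hr.ne']
      have e1 : (r + t) ^ (-a - 1) = ((r + t) ^ (a + 1))⁻¹ := by
        rw [show (-a - 1 : ℝ) = -(a + 1) by ring, Real.rpow_neg hrt.le]
      have e2 : r ^ (-a - 1 : ℝ) = (r ^ (a + 1 : ℝ))⁻¹ := by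
        rw [show (-a - 1 : ℝ) = -(a + 1) by ring, Real.rpow_neg hr.le]
      rw [h1, Real.div_rpow hrt.le hr.le, e1, e2, hGa1, ← hxpow, ← hexp, ← hrpow]
      field_simp [hG, ha.ne', hra.ne', hrta.ne']
  have hmeas : Measurable fun x : ℝ => x * Real.exp (-t * x) := by fun_prop
  rw [integral_eq_lintegral_of_nonneg_ae
      (gammaMeasure_ae_nonneg.mono fun s hs => by positivity)
      hmeas.aestronglyMeasurable]
  rw [gammaMeasure, lintegral_withDensity_eq_lintegral_mul _ (measurable_gammaPDF a r)
      hmeas.ennreal_ofReal]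
  simp only [Pi.mul_apply]
  calc (∫⁻ x, gammaPDF a r x * ENNReal.ofReal (x * Real.exp (-t * x))).toReal
      = (∫⁻ x, ENNReal.ofReal ((a / r) * (1 + t / r) ^ (-a - 1))
          * gammaPDF (a + 1) (r + t) x).toReal := by
        congr 1; exact lintegral_congr key
    _ = (a / r) * (1 + t / r) ^ (-a - 1) := by
        rw [lintegral_const_mul _ (measurable_gammaPDF (a + 1) (r + t)),
          lintegral_gammaPDF_eq_one ha1 hrt, mul_one, ENNReal.toReal_ofReal hc]

lemma integrable_exp_gamma {a r : ℝ} (t : ℝ) (ha : 0 < a) (hr : 0 < r) (ht : 0 ≤ t) :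
    Integrable (fun s => Real.exp (-t * s)) (gammaMeasure a r) := by
  haveI : IsProbabilityMeasure (gammaMeasure a r) := isProbabilityMeasure_gammaMeasure ha hr
  have hm : Measurable fun s : ℝ => Real.exp (-t * s) := by fun_prop
  refine (integrable_const (1:ℝ)).mono' hm.aestronglyMeasurable ?_
  refine gammaMeasure_ae_nonneg.mono fun s hs => ?_
  rw [Real.norm_eq_abs, abs_of_nonneg (Real.exp_pos _).le]
  exact Real.exp_le_one_iff.mpr (by nlinarith)

lemma integrable_id_mul_exp_gamma {a r : ℝ} (t : ℝ) (ha : 0 < a) (hr : 0 < r) (ht : 0 < t) :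
    Integrable (fun s => s * Real.exp (-t * s)) (gammaMeasure a r) := by
  haveI : IsProbabilityMeasure (gammaMeasure a r) := isProbabilityMeasure_gammaMeasure ha hr
  have hm : Measurable fun s : ℝ => s * Real.exp (-t * s) := by fun_prop
  refine (integrable_const (1/t : ℝ)).mono' hm.aestronglyMeasurable ?_
  refine gammaMeasure_ae_nonneg.mono fun s hs => ?_
  rw [Real.norm_eq_abs, abs_of_nonneg (by positivity)]
  rw [neg_mul, Real.exp_neg, mul_comm, inv_mul_eq_div, div_le_div_iff₀ (Real.exp_pos _) ht]
  nlinarith [Real.add_one_le_exp (t * s)]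

/-- Pairwise likelihood, one exceedance: with `Λ₁ = S₁ + S₂`, `Λ₂ = S₂ + S₃` in the
slice model, `a₁ + a₂ = a₂ + a₃ = α`, and `x ≥ 0`,
`E[Λ₁ e^{-(κ+x)Λ₁}(1 - e^{-κΛ₂})]`
`= (α/β)(1 + (κ+x)/β)^{-α-1}`
`- (1/β)(1 + (κ+x)/β)^{-a₁-1}(1 + (2κ+x)/β)^{-a₂-1}(1 + κ/β)^{-a₃}`
`· [α(1 + (κ+x)/β) + a₁κ/β]`. -/
theorem pairwise_likelihood_one_exceedance (β κ a₁ a₂ a₃ α : ℝ)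
    (hβ : 0 < β) (hκ : 0 < κ) (ha₁ : 0 < a₁) (ha₂ : 0 < a₂) (ha₃ : 0 < a₃)
    (hα₁ : a₁ + a₂ = α) (hα₂ : a₂ + a₃ = α) :
    ∀ x : ℝ, 0 ≤ x →
      (∫ s : ℝ × ℝ × ℝ,
          (s.1 + s.2.1) * Real.exp (-(κ + x) * (s.1 + s.2.1))
            * (1 - Real.exp (-κ * (s.2.1 + s.2.2)))
          ∂(sliceMeasure a₁ a₂ a₃ β))
        = (α / β) * (1 + (κ + x) / β) ^ (-α - 1)
          - (1 / β) * (1 + (κ + x) / β) ^ (-a₁ - 1)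
              * (1 + (2 * κ + x) / β) ^ (-a₂ - 1) * (1 + κ / β) ^ (-a₃)
              * (α * (1 + (κ + x) / β) + a₁ * κ / β) := by
  intro x hx
  haveI h1 : IsProbabilityMeasure (gammaMeasure a₁ β) := isProbabilityMeasure_gammaMeasure ha₁ hβ
  haveI h2 : IsProbabilityMeasure (gammaMeasure a₂ β) := isProbabilityMeasure_gammaMeasure ha₂ hβ
  haveI h3 : IsProbabilityMeasure (gammaMeasure a₃ β) := isProbabilityMeasure_gammaMeasure ha₃ hβ
  set t : ℝ := κ + x with htdef
  set u : ℝ := 2 * κ + x with hudef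
  have htpos : 0 < t := by positivity
  have hupos : 0 < u := by positivity
  -- the four elementary one-dimensional functions
  set f₁ : ℝ → ℝ := fun s => s * Real.exp (-t * s) with hf₁
  set f₂ : ℝ → ℝ := fun s => Real.exp (-t * s) with hf₂
  set g₁ : ℝ → ℝ := fun s => Real.exp (-u * s) with hg₁
  set g₂ : ℝ → ℝ := fun s => s * Real.exp (-u * s) with hg₂
  set h₀ : ℝ → ℝ := fun s => Real.exp (-κ * s) with hh₀
  have hpt : ∀ s : ℝ × ℝ × ℝ,
      (s.1 + s.2.1) * Real.exp (-t * (s.1 + s.2.1)) * (1 - Real.exp (-κ * (s.2.1 + s.2.2)))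
        = (f₁ s.1 * (f₂ s.2.1 * (1:ℝ)) + f₂ s.1 * (f₁ s.2.1 * (1:ℝ)))
          - (f₁ s.1 * (g₁ s.2.1 * h₀ s.2.2) + f₂ s.1 * (g₂ s.2.1 * h₀ s.2.2)) := by
    rintro ⟨s₁, s₂, s₃⟩
    simp only [hf₁, hf₂, hg₁, hg₂, hh₀]
    have e1 : Real.exp (-t * (s₁ + s₂)) = Real.exp (-t * s₁) * Real.exp (-t * s₂) := by
      rw [← Real.exp_add]; ring_nf
    have e2 : Real.exp (-t * (s₁ + s₂)) * Real.exp (-κ * (s₂ + s₃))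
        = Real.exp (-t * s₁) * (Real.exp (-u * s₂) * Real.exp (-κ * s₃)) := by
      rw [← Real.exp_add, ← Real.exp_add, ← Real.exp_add]
      congr 1
      simp only [hudef, htdef]; ring
    calc (s₁ + s₂) * Real.exp (-t * (s₁ + s₂)) * (1 - Real.exp (-κ * (s₂ + s₃)))
        = (s₁ + s₂) * Real.exp (-t * (s₁ + s₂))
          - (s₁ + s₂) * (Real.exp (-t * (s₁ + s₂)) * Real.exp (-κ * (s₂ + s₃))) := by ring
      _ = _ := by rw [e2, e1]; ring
  have hchg : (∫ s : ℝ × ℝ × ℝ,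
      (s.1 + s.2.1) * Real.exp (-t * (s.1 + s.2.1)) * (1 - Real.exp (-κ * (s.2.1 + s.2.2)))
      ∂(sliceMeasure a₁ a₂ a₃ β))
      = ∫ s : ℝ × ℝ × ℝ,
      ((f₁ s.1 * (f₂ s.2.1 * (1:ℝ)) + f₂ s.1 * (f₁ s.2.1 * (1:ℝ)))
          - (f₁ s.1 * (g₁ s.2.1 * h₀ s.2.2) + f₂ s.1 * (g₂ s.2.1 * h₀ s.2.2)))
      ∂(sliceMeasure a₁ a₂ a₃ β) :=
    integral_congr_ae (Filter.Eventually.of_forall hpt)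
  rw [hchg]
  -- integrability
  have if₁ : ∀ {a : ℝ}, 0 < a → Integrable f₁ (gammaMeasure a β) :=
    fun ha => integrable_id_mul_exp_gamma t ha hβ htpos
  have if₂ : ∀ {a : ℝ}, 0 < a → Integrable f₂ (gammaMeasure a β) :=
    fun ha => integrable_exp_gamma t ha hβ htpos.le
  have ig₁ : Integrable g₁ (gammaMeasure a₂ β) := integrable_exp_gamma u ha₂ hβ hupos.le
  have ig₂ : Integrable g₂ (gammaMeasure a₂ β) := integrable_id_mul_exp_gamma u ha₂ hβ hupos
  have ih₀ : Integrable h₀ (gammaMeasure a₃ β) := integrable_exp_gamma κ ha₃ hβ hκ.le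
  have icst : Integrable (fun _ : ℝ => (1:ℝ)) (gammaMeasure a₃ β) := integrable_const 1
  have I1 : Integrable (fun s : ℝ × ℝ × ℝ => f₁ s.1 * (f₂ s.2.1 * (1:ℝ)))
      (sliceMeasure a₁ a₂ a₃ β) := (if₁ ha₁).mul_prod ((if₂ ha₂).mul_prod icst)
  have I2 : Integrable (fun s : ℝ × ℝ × ℝ => f₂ s.1 * (f₁ s.2.1 * (1:ℝ)))
      (sliceMeasure a₁ a₂ a₃ β) := (if₂ ha₁).mul_prod ((if₁ ha₂).mul_prod icst)
  have I3 : Integrable (fun s : ℝ × ℝ × ℝ => f₁ s.1 * (g₁ s.2.1 * h₀ s.2.2))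
      (sliceMeasure a₁ a₂ a₃ β) := (if₁ ha₁).mul_prod (ig₁.mul_prod ih₀)
  have I4 : Integrable (fun s : ℝ × ℝ × ℝ => f₂ s.1 * (g₂ s.2.1 * h₀ s.2.2))
      (sliceMeasure a₁ a₂ a₃ β) := (if₂ ha₁).mul_prod (ig₂.mul_prod ih₀)
  have I12 : Integrable (fun s : ℝ × ℝ × ℝ =>
      f₁ s.1 * (f₂ s.2.1 * (1:ℝ)) + f₂ s.1 * (f₁ s.2.1 * (1:ℝ)))
      (sliceMeasure a₁ a₂ a₃ β) := I1.add I2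
  have I34 : Integrable (fun s : ℝ × ℝ × ℝ =>
      f₁ s.1 * (g₁ s.2.1 * h₀ s.2.2) + f₂ s.1 * (g₂ s.2.1 * h₀ s.2.2))
      (sliceMeasure a₁ a₂ a₃ β) := I3.add I4
  rw [integral_sub I12 I34, integral_add I1 I2, integral_add I3 I4]
  -- evaluate each product integral
  have P : ∀ (F G H : ℝ → ℝ),
      (∫ s : ℝ × ℝ × ℝ, F s.1 * (G s.2.1 * H s.2.2) ∂(sliceMeasure a₁ a₂ a₃ β))
        = (∫ y, F y ∂(gammaMeasure a₁ β)) * ((∫ y, G y ∂(gammaMeasure a₂ β))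
            * (∫ y, H y ∂(gammaMeasure a₃ β))) := by
    intro F G H
    rw [sliceMeasure, integral_prod_mul F (fun y : ℝ × ℝ => G y.1 * H y.2),
      integral_prod_mul G H]
  rw [P f₁ f₂ (fun _ => 1), P f₂ f₁ (fun _ => 1), P f₁ g₁ h₀, P f₂ g₂ h₀]
  have v₁ : ∀ {a : ℝ}, 0 < a →
      (∫ y, f₁ y ∂(gammaMeasure a β)) = (a / β) * (1 + t / β) ^ (-a - 1) :=
    fun ha => gamma_moment_integral t ha hβ htpos.le
  have v₂ : ∀ {a : ℝ}, 0 < a → (∫ y, f₂ y ∂(gammaMeasure a β)) = (1 + t / β) ^ (-a) :=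
    fun ha => gamma_exp_integral t ha hβ htpos.le
  have w₁ : (∫ y, g₁ y ∂(gammaMeasure a₂ β)) = (1 + u / β) ^ (-a₂) :=
    gamma_exp_integral u ha₂ hβ hupos.le
  have w₂ : (∫ y, g₂ y ∂(gammaMeasure a₂ β)) = (a₂ / β) * (1 + u / β) ^ (-a₂ - 1) :=
    gamma_moment_integral u ha₂ hβ hupos.le
  have z₀ : (∫ y, h₀ y ∂(gammaMeasure a₃ β)) = (1 + κ / β) ^ (-a₃) :=
    gamma_exp_integral κ ha₃ hβ hκ.le
  have zc : (∫ _ : ℝ, (1:ℝ) ∂(gammaMeasure a₃ β)) = 1 := by simp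
  rw [v₁ ha₁, v₂ ha₁, v₁ ha₂, v₂ ha₂, w₁, w₂, z₀, zc]
  -- algebra
  set A : ℝ := 1 + t / β with hA
  set B : ℝ := 1 + u / β with hB
  set C : ℝ := (1 + κ / β) ^ (-a₃) with hC
  have hA0 : 0 < A := by positivity
  have hB0 : 0 < B := by positivity
  have eA2 : A ^ (-a₂) = A ^ (-a₂ - 1) * A := by
    rw [← Real.rpow_add_one hA0.ne']; ring_nf
  have eA1 : A ^ (-a₁) = A ^ (-a₁ - 1) * A := by
    rw [← Real.rpow_add_one hA0.ne']; ring_nf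
  have eB : B ^ (-a₂) = B ^ (-a₂ - 1) * B := by
    rw [← Real.rpow_add_one hB0.ne']; ring_nf
  have eα : A ^ (-α - 1) = A ^ (-a₁ - 1) * A ^ (-a₂ - 1) * A := by
    rw [← Real.rpow_add hA0, ← Real.rpow_add_one hA0.ne']
    congr 1; linarith
  have hBA : B = A + κ / β := by
    rw [hA, hB, hudef, htdef]; ring
  rw [eA2, eA1, eB, eα, hBA, ← hα₁]
  field_simp
  ring
end

section
/- Pairwise likelihood, two exceedances: let β, κ > 0, a₁, a₂, a₃ > 0, let μ = Γ(a₁,β) ⊗ Γ(a₂,β) ⊗ Γ(a₃,β) on ℝ³, and set Λ₁ = s₁ + s₂, Λ₂ = s₂ + s₃. Then for all x₁, x₂ ≥ 0, ∫_{ℝ³} Λ₁ Λ₂ e^{−(κ+x₁)Λ₁ − (κ+x₂)Λ₂} dμ = (1/β²)(1 + (κ+x₁)/β)^{−a₁−1} (1 + (2κ+x₁+x₂)/β)^{−a₂−2} (1 + (κ+x₂)/β)^{−a₃−1} × [ a₁a₂ (1 + (2κ+x₁+x₂)/β)(1 + (κ+x₂)/β) + a₁a₃ (1 + (2κ+x₁+x₂)/β)²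 + a₂(a₂+1)(1 + (κ+x₁)/β)(1 + (κ+x₂)/β) + a₂a₃ (1 + (κ+x₁)/β)(1 + (2κ+x₁+x₂)/β) ]. -/
open MeasureTheory ProbabilityTheory Real
open Set

lemma pdf_eq (a r : ℝ) :
    gammaPDF a r = fun x => ((Real.toNNReal (gammaPDFReal a r x) : NNReal) : ENNReal) := by
  funext x
  rw [gammaPDF, ENNReal.ofReal]

lemma gamma_integrable {a r c : ℝ} (k : ℕ) (ha : 0 < a) (hr : 0 < r) (hc : 0 ≤ c) :
    Integrable (fun x : ℝ => x ^ k * Real.exp (-(c * x))) (gammaMeasure a r) := by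
  have hrc : 0 < r + c := by linarith
  rw [gammaMeasure, pdf_eq,
    integrable_withDensity_iff_integrable_smul
      ((measurable_gammaPDFReal a r).real_toNNReal)]
  have key : IntegrableOn
      (fun x : ℝ => (r ^ a / Real.Gamma a) * (x ^ ((a + k) - 1) * Real.exp (-(r + c) * x)))
      (Ioi 0) := by
    apply Integrable.const_mul
    have := integrableOn_rpow_mul_exp_neg_mul_rpow
      (p := 1) (s := a + k - 1) (b := r + c)
      (by have : (0:ℝ) ≤ (k:ℝ) := Nat.cast_nonneg k; linarith) zero_lt_one hrc
    refine this.congr_fun (fun x hx => ?_) measurableSet_Ioi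
    dsimp only
    rw [Real.rpow_one]
  have hmeas : AEStronglyMeasurable
      (fun x : ℝ => (Real.toNNReal (gammaPDFReal a r x) : ℝ) • (x ^ k * Real.exp (-(c * x))))
      (volume : Measure ℝ) := by
    refine AEStronglyMeasurable.smul (f := fun x : ℝ => (Real.toNNReal (gammaPDFReal a r x) : ℝ))
      (g := fun x : ℝ => x ^ k * Real.exp (-(c * x))) ?_ ?_
    · exact ((measurable_gammaPDFReal a r).real_toNNReal.coe_nnreal_real).aestronglyMeasurable
    · exact (by fun_prop : Measurable fun x : ℝ => x ^ k * Real.exp (-(c * x))).aestronglyMeasurable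
  rw [← integrableOn_univ, ← Iio_union_Ici (a := (0:ℝ)), integrableOn_union]
  constructor
  · apply (integrableOn_zero (s := Iio (0:ℝ))).congr_fun ?_ measurableSet_Iio
    intro x hx
    simp [gammaPDFReal, not_le.mpr (mem_Iio.mp hx)]
  · rw [integrableOn_Ici_iff_integrableOn_Ioi]
    refine key.congr_fun (fun x hx => ?_) measurableSet_Ioi
    have hx0 : 0 < x := mem_Ioi.mp hx
    rw [NNReal.smul_def, smul_eq_mul, Real.coe_toNNReal _ (gammaPDFReal_nonneg ha hr x),
      gammaPDFReal, if_pos hx0.le]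
    dsimp only
    rw [show (a + k) - 1 = (a - 1) + (k : ℝ) by ring, Real.rpow_add hx0, Real.rpow_natCast]
    rw [show -(r + c) * x = -(r * x) + -(c * x) by ring, Real.exp_add]
    ring

lemma gamma_moment {a r c : ℝ} (k : ℕ) (ha : 0 < a) (hr : 0 < r) (hc : 0 ≤ c) :
    ∫ x, x ^ k * Real.exp (-(c * x)) ∂(gammaMeasure a r)
      = Real.Gamma (a + k) / Real.Gamma a * (1 / r) ^ k * (1 + c / r) ^ (-(a + (k : ℝ))) := by
  have hrc : 0 < r + c := by linarith
  have hak : 0 < a + (k : ℝ) := by positivity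
  rw [gammaMeasure, pdf_eq,
    integral_withDensity_eq_integral_smul ((measurable_gammaPDFReal a r).real_toNNReal)]
  have h1 : (∫ x, (Real.toNNReal (gammaPDFReal a r x))
        • (x ^ k * Real.exp (-(c * x))) ∂(volume : Measure ℝ))
      = ∫ x in Ioi (0:ℝ),
          (r ^ a / Real.Gamma a) * (x ^ ((a + (k : ℝ)) - 1) * Real.exp (-((r + c) * x))) := by
    rw [← setIntegral_eq_integral_of_forall_compl_eq_zero (s := Ici (0:ℝ))
      (fun x hx => by
        simp [gammaPDFReal, not_le.mpr (notMem_Ici.mp hx : x < 0)]),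
      integral_Ici_eq_integral_Ioi]
    refine setIntegral_congr_fun measurableSet_Ioi (fun x hx => ?_)
    have hx0 : (0:ℝ) < x := mem_Ioi.mp hx
    rw [NNReal.smul_def, smul_eq_mul, Real.coe_toNNReal _ (gammaPDFReal_nonneg ha hr x),
      gammaPDFReal, if_pos hx0.le,
      show (a + (k:ℝ)) - 1 = (a - 1) + (k : ℝ) by ring, Real.rpow_add hx0, Real.rpow_natCast,
      show -((r + c) * x) = -(r * x) + -(c * x) by ring, Real.exp_add]
    ring
  rw [h1, integral_const_mul,
    show (a + (k:ℝ)) - 1 = (a + (k:ℝ)) - 1 from rfl]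
  rw [show (∫ x in Ioi (0:ℝ), x ^ ((a + (k:ℝ)) - 1) * Real.exp (-((r + c) * x)))
      = (1 / (r + c)) ^ (a + (k:ℝ)) * Real.Gamma (a + (k:ℝ)) from
    integral_rpow_mul_exp_neg_mul_Ioi hak hrc]
  -- now algebra: r^a/Γa * ((1/(r+c))^(a+k) * Γ(a+k)) = Γ(a+k)/Γa * (1/r)^k * (1+c/r)^(-(a+k))
  have h2 : (1 + c / r) = (r + c) / r := by field_simp
  rw [h2, Real.div_rpow hrc.le hr.le, Real.rpow_neg (by positivity),
    Real.div_rpow (by norm_num) hrc.le, Real.one_rpow,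
    ← Real.rpow_natCast (1 / r) k, Real.div_rpow (by norm_num) hr.le, Real.one_rpow,
    Real.rpow_neg hr.le, Real.rpow_add hr]
  have hΓ : Real.Gamma a ≠ 0 := (Real.Gamma_pos_of_pos ha).ne'
  have h3 : ((r + c) : ℝ) ^ (a + (k:ℝ)) ≠ 0 := by positivity
  have h4 : (r:ℝ) ^ a ≠ 0 := by positivity
  have h5 : (r:ℝ) ^ ((k:ℝ)) ≠ 0 := by positivity
  field_simp

lemma gm0 {a r c : ℝ} (ha : 0 < a) (hr : 0 < r) (hc : 0 ≤ c) :
    ∫ x, Real.exp (-(c * x)) ∂(gammaMeasure a r) = (1 + c / r) ^ (-a) := by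
  have := gamma_moment 0 ha hr hc
  simp only [pow_zero, one_mul, Nat.cast_zero, add_zero] at this
  rw [this, div_self (Real.Gamma_pos_of_pos ha).ne', one_mul, one_mul]

lemma gm1 {a r c : ℝ} (ha : 0 < a) (hr : 0 < r) (hc : 0 ≤ c) :
    ∫ x, x * Real.exp (-(c * x)) ∂(gammaMeasure a r)
      = a / r * (1 + c / r) ^ (-a - 1) := by
  have := gamma_moment 1 ha hr hc
  simp only [pow_one, Nat.cast_one] at this
  rw [this, Real.Gamma_add_one ha.ne', show -(a + 1) = -a - 1 by ring]
  field_simp [(Real.Gamma_pos_of_pos ha).ne']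

lemma gm2 {a r c : ℝ} (ha : 0 < a) (hr : 0 < r) (hc : 0 ≤ c) :
    ∫ x, x * x * Real.exp (-(c * x)) ∂(gammaMeasure a r)
      = a * (a + 1) / r ^ 2 * (1 + c / r) ^ (-a - 2) := by
  have h := gamma_moment 2 ha hr hc
  simp only [Nat.cast_ofNat, pow_two] at h
  rw [show (fun x : ℝ => x * x * Real.exp (-(c * x)))
      = fun x : ℝ => x ^ 2 * Real.exp (-(c * x)) by funext x; ring] at *
  rw [gamma_moment 2 ha hr hc, show a + (2:ℕ) = (a + 1) + 1 by push_cast; ring,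
    Real.Gamma_add_one (by positivity), Real.Gamma_add_one ha.ne',
    show -(a + 1 + 1) = -a - 2 by ring]
  field_simp [(Real.Gamma_pos_of_pos ha).ne']

lemma gi0 {a r c : ℝ} (ha : 0 < a) (hr : 0 < r) (hc : 0 ≤ c) :
    Integrable (fun x : ℝ => Real.exp (-(c * x))) (gammaMeasure a r) := by
  simpa using gamma_integrable 0 ha hr hc

lemma gi1 {a r c : ℝ} (ha : 0 < a) (hr : 0 < r) (hc : 0 ≤ c) :
    Integrable (fun x : ℝ => x * Real.exp (-(c * x))) (gammaMeasure a r) := by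
  simpa using gamma_integrable 1 ha hr hc

lemma gi2 {a r c : ℝ} (ha : 0 < a) (hr : 0 < r) (hc : 0 ≤ c) :
    Integrable (fun x : ℝ => x * x * Real.exp (-(c * x))) (gammaMeasure a r) := by
  have := gamma_integrable 2 ha hr hc
  refine this.congr (Filter.Eventually.of_forall fun x => ?_)
  ring

/-- Pairwise likelihood, two exceedances: with `Λ₁ = S₁ + S₂`, `Λ₂ = S₂ + S₃` in the
slice model and `x₁, x₂ ≥ 0`,
`E[Λ₁Λ₂ e^{-(κ+x₁)Λ₁ - (κ+x₂)Λ₂}]`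
`= (1/β²)(1 + (κ+x₁)/β)^{-a₁-1}(1 + (2κ+x₁+x₂)/β)^{-a₂-2}(1 + (κ+x₂)/β)^{-a₃-1}`
`× [a₁a₂(1 + (2κ+x₁+x₂)/β)(1 + (κ+x₂)/β) + a₁a₃(1 + (2κ+x₁+x₂)/β)²`
`+ a₂(a₂+1)(1 + (κ+x₁)/β)(1 + (κ+x₂)/β) + a₂a₃(1 + (κ+x₁)/β)(1 + (2κ+x₁+x₂)/β)]`. -/
theorem pairwise_likelihood_two_exceedances (β κ a₁ a₂ a₃ : ℝ)
    (hβ : 0 < β) (hκ : 0 < κ) (ha₁ : 0 < a₁) (ha₂ : 0 < a₂) (ha₃ : 0 < a₃) :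
    ∀ x₁ x₂ : ℝ, 0 ≤ x₁ → 0 ≤ x₂ →
      (∫ s : ℝ × ℝ × ℝ,
          (s.1 + s.2.1) * (s.2.1 + s.2.2)
            * Real.exp (-(κ + x₁) * (s.1 + s.2.1) - (κ + x₂) * (s.2.1 + s.2.2))
          ∂(sliceMeasure a₁ a₂ a₃ β))
        = (1 / β ^ 2) * (1 + (κ + x₁) / β) ^ (-a₁ - 1)
            * (1 + (2 * κ + x₁ + x₂) / β) ^ (-a₂ - 2)
            * (1 + (κ + x₂) / β) ^ (-a₃ - 1)
            * (a₁ * a₂ * (1 + (2 * κ + x₁ + x₂) / β) * (1 + (κ + x₂) / β)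
              + a₁ * a₃ * (1 + (2 * κ + x₁ + x₂) / β) ^ (2 : ℕ)
              + a₂ * (a₂ + 1) * (1 + (κ + x₁) / β) * (1 + (κ + x₂) / β)
              + a₂ * a₃ * (1 + (κ + x₁) / β) * (1 + (2 * κ + x₁ + x₂) / β)) := by
  intro x₁ x₂ hx₁ hx₂
  haveI := isProbabilityMeasure_gammaMeasure ha₁ hβ
  haveI := isProbabilityMeasure_gammaMeasure ha₂ hβ
  haveI := isProbabilityMeasure_gammaMeasure ha₃ hβ
  set c₁ : ℝ := κ + x₁ with hc₁
  set c₂ : ℝ := κ + x₂ with hc₂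
  have hc₁0 : 0 ≤ c₁ := by rw [hc₁]; linarith
  have hc₂0 : 0 ≤ c₂ := by rw [hc₂]; linarith
  have hc₁₂0 : 0 ≤ c₁ + c₂ := by linarith
  have hsum : 2 * κ + x₁ + x₂ = c₁ + c₂ := by rw [hc₁, hc₂]; ring
  rw [hsum]
  -- pointwise decomposition
  have hpt : ∀ s : ℝ × ℝ × ℝ,
      (s.1 + s.2.1) * (s.2.1 + s.2.2)
          * Real.exp (-c₁ * (s.1 + s.2.1) - c₂ * (s.2.1 + s.2.2))
        = (s.1 * Real.exp (-(c₁ * s.1)))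
            * ((s.2.1 * Real.exp (-((c₁ + c₂) * s.2.1))) * Real.exp (-(c₂ * s.2.2)))
          + (s.1 * Real.exp (-(c₁ * s.1)))
            * (Real.exp (-((c₁ + c₂) * s.2.1)) * (s.2.2 * Real.exp (-(c₂ * s.2.2))))
          + Real.exp (-(c₁ * s.1))
            * ((s.2.1 * s.2.1 * Real.exp (-((c₁ + c₂) * s.2.1))) * Real.exp (-(c₂ * s.2.2)))
          + Real.exp (-(c₁ * s.1))
            * ((s.2.1 * Real.exp (-((c₁ + c₂) * s.2.1))) * (s.2.2 * Real.exp (-(c₂ * s.2.2)))) := by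
    intro s
    rw [show -c₁ * (s.1 + s.2.1) - c₂ * (s.2.1 + s.2.2)
        = -(c₁ * s.1) + (-((c₁ + c₂) * s.2.1) + -(c₂ * s.2.2)) by ring,
      Real.exp_add, Real.exp_add]
    ring
  -- integrability of the four pieces
  have hI1 : Integrable (fun s : ℝ × ℝ × ℝ => (s.1 * Real.exp (-(c₁ * s.1)))
      * ((s.2.1 * Real.exp (-((c₁ + c₂) * s.2.1))) * Real.exp (-(c₂ * s.2.2))))
      (sliceMeasure a₁ a₂ a₃ β) :=
    (gi1 ha₁ hβ hc₁0).mul_prod ((gi1 ha₂ hβ hc₁₂0).mul_prod (gi0 ha₃ hβ hc₂0))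
  have hI2 : Integrable (fun s : ℝ × ℝ × ℝ => (s.1 * Real.exp (-(c₁ * s.1)))
      * (Real.exp (-((c₁ + c₂) * s.2.1)) * (s.2.2 * Real.exp (-(c₂ * s.2.2)))))
      (sliceMeasure a₁ a₂ a₃ β) :=
    (gi1 ha₁ hβ hc₁0).mul_prod ((gi0 ha₂ hβ hc₁₂0).mul_prod (gi1 ha₃ hβ hc₂0))
  have hI3 : Integrable (fun s : ℝ × ℝ × ℝ => Real.exp (-(c₁ * s.1))
      * ((s.2.1 * s.2.1 * Real.exp (-((c₁ + c₂) * s.2.1))) * Real.exp (-(c₂ * s.2.2))))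
      (sliceMeasure a₁ a₂ a₃ β) :=
    (gi0 ha₁ hβ hc₁0).mul_prod ((gi2 ha₂ hβ hc₁₂0).mul_prod (gi0 ha₃ hβ hc₂0))
  have hI4 : Integrable (fun s : ℝ × ℝ × ℝ => Real.exp (-(c₁ * s.1))
      * ((s.2.1 * Real.exp (-((c₁ + c₂) * s.2.1))) * (s.2.2 * Real.exp (-(c₂ * s.2.2)))))
      (sliceMeasure a₁ a₂ a₃ β) :=
    (gi0 ha₁ hβ hc₁0).mul_prod ((gi1 ha₂ hβ hc₁₂0).mul_prod (gi1 ha₃ hβ hc₂0))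
  have hI12 : Integrable (fun s : ℝ × ℝ × ℝ =>
      (s.1 * Real.exp (-(c₁ * s.1)))
          * ((s.2.1 * Real.exp (-((c₁ + c₂) * s.2.1))) * Real.exp (-(c₂ * s.2.2)))
        + (s.1 * Real.exp (-(c₁ * s.1)))
          * (Real.exp (-((c₁ + c₂) * s.2.1)) * (s.2.2 * Real.exp (-(c₂ * s.2.2)))))
      (sliceMeasure a₁ a₂ a₃ β) := hI1.add hI2
  have hI123 : Integrable (fun s : ℝ × ℝ × ℝ =>
      (s.1 * Real.exp (-(c₁ * s.1)))
          * ((s.2.1 * Real.exp (-((c₁ + c₂) * s.2.1))) * Real.exp (-(c₂ * s.2.2)))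
        + (s.1 * Real.exp (-(c₁ * s.1)))
          * (Real.exp (-((c₁ + c₂) * s.2.1)) * (s.2.2 * Real.exp (-(c₂ * s.2.2))))
        + Real.exp (-(c₁ * s.1))
          * ((s.2.1 * s.2.1 * Real.exp (-((c₁ + c₂) * s.2.1))) * Real.exp (-(c₂ * s.2.2))))
      (sliceMeasure a₁ a₂ a₃ β) := hI12.add hI3
  have key : ∀ f g h : ℝ → ℝ,
      (∫ s : ℝ × ℝ × ℝ, f s.1 * (g s.2.1 * h s.2.2) ∂(sliceMeasure a₁ a₂ a₃ β))
        = (∫ t, f t ∂(gammaMeasure a₁ β))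
            * ((∫ t, g t ∂(gammaMeasure a₂ β)) * (∫ t, h t ∂(gammaMeasure a₃ β))) := by
    intro f g h
    rw [sliceMeasure, integral_prod_mul f (fun p : ℝ × ℝ => g p.1 * h p.2),
      integral_prod_mul g h]
  rw [integral_congr_ae (Filter.Eventually.of_forall hpt),
    integral_add hI123 hI4, integral_add hI12 hI3,
    integral_add hI1 hI2,
    key (fun t => t * Real.exp (-(c₁ * t))) (fun t => t * Real.exp (-((c₁ + c₂) * t)))
      (fun t => Real.exp (-(c₂ * t))),
    key (fun t => t * Real.exp (-(c₁ * t))) (fun t => Real.exp (-((c₁ + c₂) * t)))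
      (fun t => t * Real.exp (-(c₂ * t))),
    key (fun t => Real.exp (-(c₁ * t))) (fun t => t * t * Real.exp (-((c₁ + c₂) * t)))
      (fun t => Real.exp (-(c₂ * t))),
    key (fun t => Real.exp (-(c₁ * t))) (fun t => t * Real.exp (-((c₁ + c₂) * t)))
      (fun t => t * Real.exp (-(c₂ * t))),
    gm0 ha₁ hβ hc₁0, gm1 ha₁ hβ hc₁0,
    gm0 ha₂ hβ hc₁₂0, gm1 ha₂ hβ hc₁₂0, gm2 ha₂ hβ hc₁₂0,
    gm0 ha₃ hβ hc₂0, gm1 ha₃ hβ hc₂0]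
  -- algebra
  have hu : (0:ℝ) < 1 + c₁ / β := by positivity
  have hv : (0:ℝ) < 1 + (c₁ + c₂) / β := by positivity
  have hw : (0:ℝ) < 1 + c₂ / β := by positivity
  have e1 : (1 + c₁ / β) ^ (-a₁) = (1 + c₁ / β) ^ (-a₁ - 1) * (1 + c₁ / β) := by
    rw [← Real.rpow_add_one hu.ne']; congr 1; ring
  have e2 : (1 + (c₁ + c₂) / β) ^ (-a₂)
      = (1 + (c₁ + c₂) / β) ^ (-a₂ - 2) * (1 + (c₁ + c₂) / β) * (1 + (c₁ + c₂) / β) := by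
    rw [← Real.rpow_add_one hv.ne', ← Real.rpow_add_one hv.ne']; congr 1; ring
  have e3 : (1 + (c₁ + c₂) / β) ^ (-a₂ - 1)
      = (1 + (c₁ + c₂) / β) ^ (-a₂ - 2) * (1 + (c₁ + c₂) / β) := by
    rw [← Real.rpow_add_one hv.ne']; congr 1; ring
  have e4 : (1 + c₂ / β) ^ (-a₃) = (1 + c₂ / β) ^ (-a₃ - 1) * (1 + c₂ / β) := by
    rw [← Real.rpow_add_one hw.ne']; congr 1; ring
  rw [e1, e2, e3, e4]
  ring
end
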